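/- For any weak composition α, the fundamental Demazure atom satisfies the recursion: if α_i = 0 and α_{i+1} ≠ 0, then Ã_α = θ̃_i(Ã_{s_i(α)}). -/

import Mathlib

open MvPolynomial

/-- Hivert's quasisymmetric swap on exponent vectors: exchange the exponents in
positions `i` and `i+1` if one of them is zero, otherwise do nothing. -/
noncomputable def tswapE (n i : ℕ) (hi : i + 1 < n) (β : Fin n →₀ ℕ) : Fin n →₀ ℕ :=
  if β ⟨i, by omega⟩ = 0 ∨ β ⟨i + 1, hi⟩ = 0 then
    β.equivMapDomain (Equiv.swap (⟨i, by omega⟩ : Fin n) ⟨i + 1, hi⟩)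
  else β

/-- Hivert's quasisymmetric action `s̃ᵢ` on polynomials, acting monomial-wise by
`s̃ᵢ(x^β) = x^(s̃ᵢ β)` and extended linearly. -/
noncomputable def stilde (n i : ℕ) (hi : i + 1 < n) (f : MvPolynomial (Fin n) ℂ) :
    MvPolynomial (Fin n) ℂ :=
  f.support.sum fun β => monomial (tswapE n i hi β) (coeff β f)
open scoped Classical

/-- Hivert's operator `π̃ᵢ f = (xᵢ f − s̃ᵢ(xᵢ f))/(xᵢ − xᵢ₊₁)`, defined as the
unique `g` with `(xᵢ − xᵢ₊₁) * g = xᵢ f − s̃ᵢ(xᵢ f)` (such a `g` always exists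
and is unique since `xᵢ − xᵢ₊₁` is a nonzerodivisor).  For `i` out of range,
`π̃ᵢ` is the identity. -/
noncomputable def ptilde (n i : ℕ) (f : MvPolynomial (Fin n) ℂ) : MvPolynomial (Fin n) ℂ :=
  if h : i + 1 < n then
    (if hg : ∃ g : MvPolynomial (Fin n) ℂ,
        ((X ⟨i, by omega⟩ : MvPolynomial (Fin n) ℂ) - X ⟨i + 1, h⟩) * g
        = (X ⟨i, by omega⟩ : MvPolynomial (Fin n) ℂ) * f
            - stilde n i h ((X ⟨i, by omega⟩ : MvPolynomial (Fin n) ℂ) * f) then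
      hg.choose
    else 0)
  else f

/-- `θ̃ᵢ := π̃ᵢ − id`. -/
noncomputable def thetatilde (n i : ℕ) (f : MvPolynomial (Fin n) ℂ) : MvPolynomial (Fin n) ℂ :=
  ptilde n i f - f

/-- The ordinary transposition `sᵢ` acting on weak compositions of length `n`
(identity when `i` is out of range). -/
def swapAt (n i : ℕ) (α : Fin n → ℕ) : Fin n → ℕ :=
  if h : i + 1 < n then α ∘ Equiv.swap (⟨i, by omega⟩ : Fin n) ⟨i + 1, h⟩ else α

/-- `flatC n α` is `flat(α)`: the composition obtained from `α` by moving all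
zero entries to the right end (keeping the nonzero entries in order). -/
def flatC (n : ℕ) (α : Fin n → ℕ) : Fin n → ℕ := fun p =>
  ((List.ofFn α).filter (· ≠ 0)).getD p 0

/-- `IsMinWord n l α` says that `l = [i₁,…,i_k]` is a word of minimal length
with `s_{i₁} ⋯ s_{i_k} (α) = flat(α)`; i.e. it is a reduced word for the
minimal-length permutation `w_α` with `w_α(α) = flat(α)`. -/
def IsMinWord (n : ℕ) (l : List ℕ) (α : Fin n → ℕ) : Prop :=
  (∀ j ∈ l, j + 1 < n) ∧ l.foldr (swapAt n) α = flatC n α ∧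
    ∀ l' : List ℕ, (∀ j ∈ l', j + 1 < n) → l'.foldr (swapAt n) α = flatC n α →
      l.length ≤ l'.length

/-- Exponent vector of a monomial, as a finitely supported function. -/
noncomputable def toExp (n : ℕ) (α : Fin n → ℕ) : Fin n →₀ ℕ :=
  Finsupp.equivFunOnFinite.symm α

/-- For a word `l = [i₁,…,i_k]` representing `w = s_{i₁} ⋯ s_{i_k}`, the operator
`θ̃_{w⁻¹} = θ̃_{i_k} ⋯ θ̃_{i₁}` applied to `f`. -/
noncomputable def thetaWordInv (n : ℕ) (l : List ℕ) (f : MvPolynomial (Fin n) ℂ) :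
    MvPolynomial (Fin n) ℂ :=
  l.foldl (fun acc j => thetatilde n j acc) f

/-- For a word `l = [i₁,…,i_k]` representing `w = s_{i₁} ⋯ s_{i_k}`, the operator
`π̃_{w⁻¹} = π̃_{i_k} ⋯ π̃_{i₁}` applied to `f`. -/
noncomputable def piWordInv (n : ℕ) (l : List ℕ) (f : MvPolynomial (Fin n) ℂ) :
    MvPolynomial (Fin n) ℂ :=
  l.foldl (fun acc j => ptilde n j acc) f

section PartA

variable {n : ℕ}

lemma toExp_apply (n : ℕ) (α : Fin n → ℕ) (p : Fin n) : toExp n α p = α p := rfl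

/-- Linear extension of a map on exponents. -/
noncomputable def linext (n : ℕ) (T : (Fin n →₀ ℕ) → MvPolynomial (Fin n) ℂ)
    (f : MvPolynomial (Fin n) ℂ) : MvPolynomial (Fin n) ℂ :=
  ∑ δ ∈ f.support, coeff δ f • T δ

lemma linext_eq_sum (T : (Fin n →₀ ℕ) → MvPolynomial (Fin n) ℂ)
    (f : MvPolynomial (Fin n) ℂ) (s : Finset (Fin n →₀ ℕ)) (hs : f.support ⊆ s) :
    linext n T f = ∑ δ ∈ s, coeff δ f • T δ := by
  rw [linext]
  refine Finset.sum_subset (f := fun δ => coeff δ f • T δ) hs fun x _ hx => ?_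
  show coeff x f • T x = 0
  rw [MvPolynomial.notMem_support_iff.mp hx, zero_smul]

lemma linext_add (T : (Fin n →₀ ℕ) → MvPolynomial (Fin n) ℂ)
    (f g : MvPolynomial (Fin n) ℂ) :
    linext n T (f + g) = linext n T f + linext n T g := by
  rw [linext_eq_sum T f (f.support ∪ g.support) Finset.subset_union_left,
    linext_eq_sum T g (f.support ∪ g.support) Finset.subset_union_right,
    linext_eq_sum T (f + g) (f.support ∪ g.support) (MvPolynomial.support_add),
    ← Finset.sum_add_distrib]
  refine Finset.sum_congr rfl fun δ _ => ?_
  rw [MvPolynomial.coeff_add, add_smul]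

lemma linext_smul (T : (Fin n →₀ ℕ) → MvPolynomial (Fin n) ℂ)
    (c : ℂ) (f : MvPolynomial (Fin n) ℂ) :
    linext n T (c • f) = c • linext n T f := by
  have hs : (c • f).support ⊆ f.support := fun x hx => by
    simp only [MvPolynomial.mem_support_iff, MvPolynomial.coeff_smul] at hx ⊢
    intro h; exact hx (by rw [h, smul_zero])
  rw [linext_eq_sum T (c • f) f.support hs, linext, Finset.smul_sum]
  refine Finset.sum_congr rfl fun δ _ => ?_
  rw [MvPolynomial.coeff_smul, smul_eq_mul, mul_smul]

/-- Linear extension as a linear map. -/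
noncomputable def linextL (n : ℕ) (T : (Fin n →₀ ℕ) → MvPolynomial (Fin n) ℂ) :
    MvPolynomial (Fin n) ℂ →ₗ[ℂ] MvPolynomial (Fin n) ℂ where
  toFun := linext n T
  map_add' := linext_add T
  map_smul' := linext_smul T

lemma linext_monomial (T : (Fin n →₀ ℕ) → MvPolynomial (Fin n) ℂ)
    (δ : Fin n →₀ ℕ) (c : ℂ) :
    linext n T (monomial δ c) = c • T δ := by
  rcases eq_or_ne c 0 with rfl | hc
  · simp [linext]
  · rw [linext, MvPolynomial.support_monomial, if_neg hc, Finset.sum_singleton,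
      MvPolynomial.coeff_monomial, if_pos rfl]

lemma stilde_eq (i : ℕ) (hi : i + 1 < n) (f : MvPolynomial (Fin n) ℂ) :
    stilde n i hi f = linext n (fun δ => monomial (tswapE n i hi δ) 1) f := by
  rw [stilde, linext]
  refine Finset.sum_congr rfl fun δ _ => ?_
  rw [MvPolynomial.smul_monomial, smul_eq_mul, mul_one]

lemma stilde_monomial (i : ℕ) (hi : i + 1 < n) (δ : Fin n →₀ ℕ) (c : ℂ) :
    stilde n i hi (monomial δ c) = monomial (tswapE n i hi δ) c := by
  rw [stilde_eq, linext_monomial, MvPolynomial.smul_monomial, smul_eq_mul, mul_one]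

lemma stilde_smul (i : ℕ) (hi : i + 1 < n) (c : ℂ) (f : MvPolynomial (Fin n) ℂ) :
    stilde n i hi (c • f) = c • stilde n i hi f := by
  rw [stilde_eq, linext_smul, ← stilde_eq]

lemma stilde_sum {ι : Type*} (i : ℕ) (hi : i + 1 < n) (s : Finset ι)
    (g : ι → MvPolynomial (Fin n) ℂ) :
    stilde n i hi (∑ x ∈ s, g x) = ∑ x ∈ s, stilde n i hi (g x) := by
  have hrepr : ∀ h, stilde n i hi h
      = linextL n (fun δ => monomial (tswapE n i hi δ) 1) h := fun h => stilde_eq i hi h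
  simp only [hrepr]
  exact map_sum _ _ _

/-- Update the exponents at slots `i` and `i+1`. -/
noncomputable def upd2 (n i : ℕ) (hi : i + 1 < n) (δ : Fin n →₀ ℕ) (a b : ℕ) : Fin n →₀ ℕ :=
  Finsupp.update (Finsupp.update δ ⟨i, by omega⟩ a) ⟨i + 1, hi⟩ b

lemma fin_ne_succ (i : ℕ) (hi : i + 1 < n) :
    (⟨i, by omega⟩ : Fin n) ≠ ⟨i + 1, hi⟩ := by
  simp [Fin.ext_iff]

lemma upd2_apply_left (i : ℕ) (hi : i + 1 < n) (δ : Fin n →₀ ℕ) (a b : ℕ) :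
    upd2 n i hi δ a b ⟨i, by omega⟩ = a := by
  rw [upd2, Finsupp.coe_update, Function.update_of_ne (fin_ne_succ i hi),
    Finsupp.coe_update, Function.update_self]

lemma upd2_apply_right (i : ℕ) (hi : i + 1 < n) (δ : Fin n →₀ ℕ) (a b : ℕ) :
    upd2 n i hi δ a b ⟨i + 1, hi⟩ = b := by
  rw [upd2, Finsupp.coe_update, Function.update_self]

lemma upd2_apply_other (i : ℕ) (hi : i + 1 < n) (δ : Fin n →₀ ℕ) (a b : ℕ)
    (p : Fin n) (h1 : (p : ℕ) ≠ i) (h2 : (p : ℕ) ≠ i + 1) :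
    upd2 n i hi δ a b p = δ p := by
  rw [upd2, Finsupp.coe_update, Function.update_of_ne (by simp [Fin.ext_iff, h2]),
    Finsupp.coe_update, Function.update_of_ne (by simp [Fin.ext_iff, h1])]

lemma upd2_self (i : ℕ) (hi : i + 1 < n) (δ : Fin n →₀ ℕ) :
    upd2 n i hi δ (δ ⟨i, by omega⟩) (δ ⟨i + 1, hi⟩) = δ := by
  rw [upd2, Finsupp.update_self, Finsupp.update_self]

lemma upd2_ext (i : ℕ) (hi : i + 1 < n) (δ δ' : Fin n →₀ ℕ) (a b : ℕ)
    (hL : δ' ⟨i, by omega⟩ = a) (hR : δ' ⟨i + 1, hi⟩ = b)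
    (hO : ∀ p : Fin n, (p : ℕ) ≠ i → (p : ℕ) ≠ i + 1 → δ' p = δ p) :
    δ' = upd2 n i hi δ a b := by
  ext p
  by_cases h1 : (p : ℕ) = i
  · have : p = ⟨i, by omega⟩ := by simp [Fin.ext_iff, h1]
    rw [this, upd2_apply_left, hL]
  · by_cases h2 : (p : ℕ) = i + 1
    · have : p = ⟨i + 1, hi⟩ := by simp [Fin.ext_iff, h2]
      rw [this, upd2_apply_right, hR]
    · rw [upd2_apply_other i hi δ a b p h1 h2, hO p h1 h2]

lemma upd2_upd2 (i : ℕ) (hi : i + 1 < n) (δ : Fin n →₀ ℕ) (a b c d : ℕ) :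
    upd2 n i hi (upd2 n i hi δ a b) c d = upd2 n i hi δ c d := by
  refine upd2_ext i hi δ _ c d (upd2_apply_left _ _ _ _ _) (upd2_apply_right _ _ _ _ _)
    fun p h1 h2 => ?_
  rw [upd2_apply_other i hi _ c d p h1 h2, upd2_apply_other i hi δ a b p h1 h2]

/-- The image `π̃ᵢ(x^δ)`, explicitly. -/
noncomputable def Pexp (n i : ℕ) (hi : i + 1 < n) (δ : Fin n →₀ ℕ) :
    MvPolynomial (Fin n) ℂ :=
  if δ ⟨i + 1, hi⟩ ≠ 0 then 0
  else ∑ k ∈ Finset.range (δ ⟨i, by omega⟩ + 1),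
    monomial (upd2 n i hi δ k (δ ⟨i, by omega⟩ - k)) 1

/-- The image `θ̃ᵢ(x^δ)`, explicitly. -/
noncomputable def Texp (n i : ℕ) (hi : i + 1 < n) (δ : Fin n →₀ ℕ) :
    MvPolynomial (Fin n) ℂ :=
  Pexp n i hi δ - monomial δ 1

lemma X_mul_monomial' (s : Fin n) (δ : Fin n →₀ ℕ) (c : ℂ) :
    (X s : MvPolynomial (Fin n) ℂ) * monomial δ c = monomial (δ + Finsupp.single s 1) c := by
  rw [MvPolynomial.X, MvPolynomial.monomial_mul, one_mul, add_comm]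

lemma single_add_upd2 (i : ℕ) (hi : i + 1 < n) (δ : Fin n →₀ ℕ) (a b : ℕ) :
    upd2 n i hi δ a b + Finsupp.single ⟨i, by omega⟩ 1 = upd2 n i hi δ (a + 1) b := by
  refine upd2_ext i hi δ _ (a + 1) b ?_ ?_ ?_
  · rw [Finsupp.add_apply, upd2_apply_left, Finsupp.single_apply, if_pos rfl]
  · rw [Finsupp.add_apply, upd2_apply_right, Finsupp.single_apply,
      if_neg (fin_ne_succ i hi), add_zero]
  · intro p h1 h2
    rw [Finsupp.add_apply, upd2_apply_other i hi δ a b p h1 h2, Finsupp.single_apply,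
      if_neg (by simp [Fin.ext_iff]; omega), add_zero]

lemma single_add_upd2' (i : ℕ) (hi : i + 1 < n) (δ : Fin n →₀ ℕ) (a b : ℕ) :
    upd2 n i hi δ a b + Finsupp.single ⟨i + 1, hi⟩ 1 = upd2 n i hi δ a (b + 1) := by
  refine upd2_ext i hi δ _ a (b + 1) ?_ ?_ ?_
  · rw [Finsupp.add_apply, upd2_apply_left, Finsupp.single_apply,
      if_neg (Ne.symm (fin_ne_succ i hi)), add_zero]
  · rw [Finsupp.add_apply, upd2_apply_right, Finsupp.single_apply, if_pos rfl]
  · intro p h1 h2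
    rw [Finsupp.add_apply, upd2_apply_other i hi δ a b p h1 h2, Finsupp.single_apply,
      if_neg (by simp [Fin.ext_iff]; omega), add_zero]

lemma tswapE_of_ne (i : ℕ) (hi : i + 1 < n) (δ : Fin n →₀ ℕ)
    (h1 : δ ⟨i, by omega⟩ ≠ 0) (h2 : δ ⟨i + 1, hi⟩ ≠ 0) :
    tswapE n i hi δ = δ := by
  rw [tswapE, if_neg]; push_neg; exact ⟨h1, h2⟩

lemma tswapE_swap (i : ℕ) (hi : i + 1 < n) (δ : Fin n →₀ ℕ)
    (h : δ ⟨i, by omega⟩ = 0 ∨ δ ⟨i + 1, hi⟩ = 0) :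
    tswapE n i hi δ
      = upd2 n i hi δ (δ ⟨i + 1, hi⟩) (δ ⟨i, by omega⟩) := by
  rw [tswapE, if_pos h]
  refine upd2_ext i hi δ _ _ _ ?_ ?_ ?_
  · rw [Finsupp.equivMapDomain_apply, Equiv.symm_swap, Equiv.swap_apply_left]
  · rw [Finsupp.equivMapDomain_apply, Equiv.symm_swap, Equiv.swap_apply_right]
  · intro p h1 h2
    rw [Finsupp.equivMapDomain_apply, Equiv.symm_swap,
      Equiv.swap_apply_of_ne_of_ne (by simp [Fin.ext_iff, h1]) (by simp [Fin.ext_iff, h2])]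

/-- The key per-monomial divisibility identity. -/
lemma mulkey (i : ℕ) (hi : i + 1 < n) (δ : Fin n →₀ ℕ) :
    ((X ⟨i, by omega⟩ : MvPolynomial (Fin n) ℂ) - X ⟨i + 1, hi⟩) * Pexp n i hi δ
      = (X ⟨i, by omega⟩ : MvPolynomial (Fin n) ℂ) * monomial δ 1
        - stilde n i hi ((X ⟨i, by omega⟩ : MvPolynomial (Fin n) ℂ) * monomial δ 1) := by
  set a := δ ⟨i, by omega⟩ with ha
  rw [X_mul_monomial' , stilde_monomial]
  have hδ1 : (δ + Finsupp.single (⟨i, by omega⟩ : Fin n) 1)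
      = upd2 n i hi δ (a + 1) (δ ⟨i + 1, hi⟩) := by
    rw [← single_add_upd2, upd2_self]
  by_cases hb : δ ⟨i + 1, hi⟩ = 0
  · -- swap case
    rw [Pexp, if_neg (by simp [hb])]
    have hsw : tswapE n i hi (δ + Finsupp.single (⟨i, by omega⟩ : Fin n) 1)
        = upd2 n i hi δ 0 (a + 1) := by
      rw [hδ1, hb, tswapE_swap _ _ _ (Or.inr (upd2_apply_right i hi δ _ _)),
        upd2_apply_left, upd2_apply_right, upd2_upd2]
    rw [hsw, hδ1, hb]
    -- telescoping
    have key : ∀ k ∈ Finset.range (a + 1),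
        ((X ⟨i, by omega⟩ : MvPolynomial (Fin n) ℂ) - X ⟨i + 1, hi⟩)
          * monomial (upd2 n i hi δ k (a - k)) 1
        = monomial (upd2 n i hi δ (k + 1) (a - k)) 1
          - monomial (upd2 n i hi δ k (a + 1 - k)) 1 := by
      intro k hk
      rw [sub_mul, X_mul_monomial', X_mul_monomial', single_add_upd2, single_add_upd2']
      have : a - k + 1 = a + 1 - k := by
        simp at hk; omega
      rw [this]
    rw [Finset.mul_sum, Finset.sum_congr rfl key]
    have tele : ∀ m : ℕ, ∑ k ∈ Finset.range m,
        ((monomial (upd2 n i hi δ (k + 1) (a - k)) (1:ℂ))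
          - monomial (upd2 n i hi δ k (a + 1 - k)) 1)
        = monomial (upd2 n i hi δ m (a + 1 - m)) 1 - monomial (upd2 n i hi δ 0 (a + 1)) 1 := by
      intro m
      have := Finset.sum_range_sub
        (f := fun k => (monomial (upd2 n i hi δ k (a + 1 - k)) (1:ℂ))) m
      simp only [Nat.sub_zero] at this
      rw [← this]
      refine Finset.sum_congr rfl fun k _ => ?_
      have : a + 1 - (k + 1) = a - k := by omega
      rw [this]
    rw [tele (a + 1), Nat.sub_self]
  · -- no-swap case
    push_neg at hb
    rw [Pexp, if_pos (by simpa using hb)]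
    rw [tswapE_of_ne _ _ _ (by rw [hδ1, upd2_apply_left]; omega)
        (by rw [hδ1, upd2_apply_right]; exact hb), sub_self, mul_zero]

lemma X_ne (i : ℕ) (hi : i + 1 < n) :
    (X ⟨i, by omega⟩ : MvPolynomial (Fin n) ℂ) ≠ X ⟨i + 1, hi⟩ := by
  intro h
  have := MvPolynomial.X_injective (R := ℂ) h
  exact fin_ne_succ i hi this

lemma ptilde_eq (i : ℕ) (hi : i + 1 < n) (f : MvPolynomial (Fin n) ℂ) :
    ptilde n i f = linext n (Pexp n i hi) f := by
  have key : ((X ⟨i, by omega⟩ : MvPolynomial (Fin n) ℂ) - X ⟨i + 1, hi⟩)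
      * linext n (Pexp n i hi) f
      = (X ⟨i, by omega⟩ : MvPolynomial (Fin n) ℂ) * f
        - stilde n i hi ((X ⟨i, by omega⟩ : MvPolynomial (Fin n) ℂ) * f) := by
    conv_rhs => rw [← MvPolynomial.support_sum_monomial_coeff f]
    rw [Finset.mul_sum, stilde_sum, linext, Finset.mul_sum, ← Finset.sum_sub_distrib]
    refine Finset.sum_congr rfl fun δ _ => ?_
    have h1 : monomial δ (coeff δ f) = coeff δ f • monomial δ (1:ℂ) := by
      rw [MvPolynomial.smul_monomial, smul_eq_mul, mul_one]
    rw [h1, mul_smul_comm, mul_smul_comm, stilde_smul, ← smul_sub, ← mulkey i hi δ]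
  have hex : ∃ g : MvPolynomial (Fin n) ℂ,
      ((X ⟨i, by omega⟩ : MvPolynomial (Fin n) ℂ) - X ⟨i + 1, hi⟩) * g
      = (X ⟨i, by omega⟩ : MvPolynomial (Fin n) ℂ) * f
          - stilde n i hi ((X ⟨i, by omega⟩ : MvPolynomial (Fin n) ℂ) * f) :=
    ⟨_, key⟩
  rw [ptilde, dif_pos hi, dif_pos hex]
  exact mul_left_cancel₀ (sub_ne_zero_of_ne (X_ne i hi)) (hex.choose_spec.trans key.symm)

lemma thetatilde_eq (i : ℕ) (hi : i + 1 < n) (f : MvPolynomial (Fin n) ℂ) :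
    thetatilde n i f = linext n (Texp n i hi) f := by
  have key : linext n (Pexp n i hi) f - linext n (Texp n i hi) f = f := by
    rw [linext, linext, ← Finset.sum_sub_distrib]
    have h2 : ∀ δ ∈ f.support, coeff δ f • Pexp n i hi δ - coeff δ f • Texp n i hi δ
        = monomial δ (coeff δ f) := by
      intro δ _
      rw [Texp, smul_sub, sub_sub_cancel, MvPolynomial.smul_monomial, smul_eq_mul, mul_one]
    rw [Finset.sum_congr rfl h2, MvPolynomial.support_sum_monomial_coeff]
  rw [thetatilde, ptilde_eq i hi]
  linear_combination key

lemma thetatilde_monomial (i : ℕ) (hi : i + 1 < n) (δ : Fin n →₀ ℕ) (c : ℂ) :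
    thetatilde n i (monomial δ c) = c • Texp n i hi δ := by
  rw [thetatilde_eq i hi, linext_monomial]

end PartA

section PartA2

variable {n : ℕ}

lemma thetatilde_smul (i : ℕ) (hi : i + 1 < n) (c : ℂ) (f : MvPolynomial (Fin n) ℂ) :
    thetatilde n i (c • f) = c • thetatilde n i f := by
  rw [thetatilde_eq i hi, linext_smul, ← thetatilde_eq i hi]

lemma thetatilde_neg (i : ℕ) (hi : i + 1 < n) (f : MvPolynomial (Fin n) ℂ) :
    thetatilde n i (-f) = -thetatilde n i f := by
  rw [← neg_one_smul ℂ f, thetatilde_smul i hi, neg_one_smul]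

lemma thetatilde_sum {ι : Type*} (i : ℕ) (hi : i + 1 < n) (s : Finset ι)
    (g : ι → MvPolynomial (Fin n) ℂ) :
    thetatilde n i (∑ x ∈ s, g x) = ∑ x ∈ s, thetatilde n i (g x) := by
  have hrepr : ∀ h, thetatilde n i h = linextL n (Texp n i hi) h :=
    fun h => thetatilde_eq i hi h
  simp only [hrepr]
  exact map_sum _ _ _

lemma Texp_of_ne (i : ℕ) (hi : i + 1 < n) (δ : Fin n →₀ ℕ) (h : δ ⟨i + 1, hi⟩ ≠ 0) :
    Texp n i hi δ = -monomial δ 1 := by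
  rw [Texp, Pexp, if_pos h, zero_sub]

lemma Texp_of_eq (i : ℕ) (hi : i + 1 < n) (δ : Fin n →₀ ℕ) (h : δ ⟨i + 1, hi⟩ = 0) :
    Texp n i hi δ = ∑ k ∈ Finset.range (δ ⟨i, by omega⟩),
      monomial (upd2 n i hi δ k (δ ⟨i, by omega⟩ - k)) 1 := by
  rw [Texp, Pexp, if_neg (by simp [h]), Finset.sum_range_succ, Nat.sub_self]
  have : upd2 n i hi δ (δ ⟨i, by omega⟩) 0 = δ :=
    (by rw [h] : upd2 n i hi δ (δ ⟨i, by omega⟩) 0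
        = upd2 n i hi δ (δ ⟨i, by omega⟩) (δ ⟨i + 1, hi⟩)).trans (upd2_self i hi δ)
  rw [this, add_sub_cancel_right]

lemma thetatilde_monomial_one (i : ℕ) (hi : i + 1 < n) (δ : Fin n →₀ ℕ) :
    thetatilde n i (monomial δ 1) = Texp n i hi δ := by
  rw [thetatilde_monomial i hi, one_smul]

lemma upd2_comm (i j : ℕ) (hi : i + 1 < n) (hj : j + 1 < n)
    (d1 : i ≠ j) (d2 : i + 1 ≠ j) (d3 : j + 1 ≠ i)
    (δ : Fin n →₀ ℕ) (a b c d : ℕ) :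
    upd2 n i hi (upd2 n j hj δ c d) a b = upd2 n j hj (upd2 n i hi δ a b) c d := by
  ext p
  by_cases p1 : (p : ℕ) = i
  · have hp : p = (⟨i, by omega⟩ : Fin n) := by simp [Fin.ext_iff, p1]
    rw [hp, upd2_apply_left, upd2_apply_other j hj _ c d _ (by simpa using d1)
      (by simp; omega), upd2_apply_left]
  · by_cases p2 : (p : ℕ) = i + 1
    · have hp : p = (⟨i + 1, hi⟩ : Fin n) := by simp [Fin.ext_iff, p2]
      rw [hp, upd2_apply_right, upd2_apply_other j hj _ c d _ (by simpa using d2)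
        (by simp; omega), upd2_apply_right]
    · by_cases p3 : (p : ℕ) = j
      · have hp : p = (⟨j, by omega⟩ : Fin n) := by simp [Fin.ext_iff, p3]
        rw [hp, upd2_apply_other i hi _ a b _ (by simpa using (Ne.symm d1))
          (by simp; omega), upd2_apply_left, upd2_apply_left]
      · by_cases p4 : (p : ℕ) = j + 1
        · have hp : p = (⟨j + 1, hj⟩ : Fin n) := by simp [Fin.ext_iff, p4]
          rw [hp, upd2_apply_other i hi _ a b _ (by simpa using d3)
            (by simp; omega), upd2_apply_right, upd2_apply_right]
        · rw [upd2_apply_other i hi _ a b p p1 p2, upd2_apply_other j hj _ c d p p3 p4,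
            upd2_apply_other j hj _ c d p p3 p4, upd2_apply_other i hi _ a b p p1 p2]

lemma upd2_val_left (i j : ℕ) (hi : i + 1 < n) (hj : j + 1 < n)
    (d1 : i ≠ j) (d3 : j + 1 ≠ i) (δ : Fin n →₀ ℕ) (c d : ℕ) :
    upd2 n j hj δ c d ⟨i, by omega⟩ = δ ⟨i, by omega⟩ :=
  upd2_apply_other j hj δ c d _ (by simpa using d1) (by simp; omega)

lemma upd2_val_right (i j : ℕ) (hi : i + 1 < n) (hj : j + 1 < n)
    (d2 : i + 1 ≠ j) (d1 : i ≠ j) (δ : Fin n →₀ ℕ) (c d : ℕ) :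
    upd2 n j hj δ c d ⟨i + 1, hi⟩ = δ ⟨i + 1, hi⟩ :=
  upd2_apply_other j hj δ c d _ (by simpa using d2) (by simp; omega)

lemma Texp_comm (i j : ℕ) (hi : i + 1 < n) (hj : j + 1 < n)
    (d1 : i ≠ j) (d2 : i + 1 ≠ j) (d3 : j + 1 ≠ i) (δ : Fin n →₀ ℕ) :
    thetatilde n i (Texp n j hj δ) = thetatilde n j (Texp n i hi δ) := by
  have d1' : j ≠ i := Ne.symm d1
  by_cases hA : δ ⟨i + 1, hi⟩ = 0
  · by_cases hB : δ ⟨j + 1, hj⟩ = 0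
    · -- both spread
      rw [Texp_of_eq j hj δ hB, Texp_of_eq i hi δ hA, thetatilde_sum i hi,
        thetatilde_sum j hj]
      have hL : ∀ k ∈ Finset.range (δ ⟨j, by omega⟩),
          thetatilde n i (monomial (upd2 n j hj δ k (δ ⟨j, by omega⟩ - k)) 1)
          = ∑ m ∈ Finset.range (δ ⟨i, by omega⟩),
              monomial (upd2 n i hi (upd2 n j hj δ k (δ ⟨j, by omega⟩ - k)) m
                (δ ⟨i, by omega⟩ - m)) 1 := by
        intro k _
        rw [thetatilde_monomial_one i hi,
          Texp_of_eq i hi _ (by rw [upd2_val_right i j hi hj d2 d1]; exact hA),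
          upd2_val_left i j hi hj d1 d3]
      have hR : ∀ m ∈ Finset.range (δ ⟨i, by omega⟩),
          thetatilde n j (monomial (upd2 n i hi δ m (δ ⟨i, by omega⟩ - m)) 1)
          = ∑ k ∈ Finset.range (δ ⟨j, by omega⟩),
              monomial (upd2 n j hj (upd2 n i hi δ m (δ ⟨i, by omega⟩ - m)) k
                (δ ⟨j, by omega⟩ - k)) 1 := by
        intro m _
        rw [thetatilde_monomial_one j hj,
          Texp_of_eq j hj _ (by rw [upd2_val_right j i hj hi (by omega) d1'
            (δ := δ) (c := m) (d := (δ ⟨i, by omega⟩ - m))]; exact hB),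
          upd2_val_left j i hj hi d1' (by omega)]
      rw [Finset.sum_congr rfl hL, Finset.sum_congr rfl hR, Finset.sum_comm]
      refine Finset.sum_congr rfl fun m _ => Finset.sum_congr rfl fun k _ => ?_
      rw [upd2_comm i j hi hj d1 d2 d3]
    · -- i spreads, j kills
      rw [Texp_of_ne j hj δ hB, thetatilde_neg i hi, thetatilde_monomial_one i hi,
        Texp_of_eq i hi δ hA, thetatilde_sum j hj]
      rw [← Finset.sum_neg_distrib]
      refine Finset.sum_congr rfl fun m _ => ?_
      rw [thetatilde_monomial_one j hj,
        Texp_of_ne j hj _ (by rw [upd2_val_right j i hj hi (by omega) d1']; exact hB)]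
  · by_cases hB : δ ⟨j + 1, hj⟩ = 0
    · -- j spreads, i kills
      rw [Texp_of_ne i hi δ hA, thetatilde_neg j hj, thetatilde_monomial_one j hj,
        Texp_of_eq j hj δ hB, thetatilde_sum i hi]
      rw [← Finset.sum_neg_distrib]
      refine (Finset.sum_congr rfl fun k _ => ?_).symm
      rw [thetatilde_monomial_one i hi,
        Texp_of_ne i hi _ (by rw [upd2_val_right i j hi hj d2 d1]; exact hA)]
    · -- both kill
      rw [Texp_of_ne j hj δ hB, Texp_of_ne i hi δ hA, thetatilde_neg i hi,
        thetatilde_neg j hj, thetatilde_monomial_one i hi, thetatilde_monomial_one j hj,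
        Texp_of_ne i hi δ hA, Texp_of_ne j hj δ hB]

/-- Far-apart `θ̃` operators commute. -/
lemma thetatilde_comm (i j : ℕ) (hi : i + 1 < n) (hj : j + 1 < n)
    (d1 : i ≠ j) (d2 : i + 1 ≠ j) (d3 : j + 1 ≠ i) (f : MvPolynomial (Fin n) ℂ) :
    thetatilde n i (thetatilde n j f) = thetatilde n j (thetatilde n i f) := by
  rw [thetatilde_eq j hj f, thetatilde_eq i hi f, linext, linext,
    thetatilde_sum i hi, thetatilde_sum j hj]
  refine Finset.sum_congr rfl fun δ _ => ?_
  rw [thetatilde_smul i hi, thetatilde_smul j hj, Texp_comm i j hi hj d1 d2 d3]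

end PartA2

section PartB

variable {n : ℕ}

/-- `j` is a "good" index for `α`: a zero immediately followed by a nonzero. -/
def Good (n : ℕ) (α : Fin n → ℕ) (j : ℕ) : Prop :=
  ∃ h : j + 1 < n, α ⟨j, by omega⟩ = 0 ∧ α ⟨j + 1, h⟩ ≠ 0

/-- Number of "zero-inversions". -/
noncomputable def Zc (n : ℕ) (α : Fin n → ℕ) : ℕ :=
  (Finset.univ.filter fun pq : Fin n × Fin n =>
    (pq.1 : ℕ) < (pq.2 : ℕ) ∧ α pq.1 = 0 ∧ α pq.2 ≠ 0).card

lemma swapAt_apply (j : ℕ) (hj : j + 1 < n) (α : Fin n → ℕ) (p : Fin n) :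
    swapAt n j α p = α (Equiv.swap (⟨j, by omega⟩ : Fin n) ⟨j + 1, hj⟩ p) := by
  rw [swapAt, dif_pos hj]; rfl

lemma swap_val (j : ℕ) (hj : j + 1 < n) (p : Fin n) :
    ((Equiv.swap (⟨j, by omega⟩ : Fin n) ⟨j + 1, hj⟩ p : Fin n) : ℕ)
      = if (p : ℕ) = j then j + 1 else if (p : ℕ) = j + 1 then j else (p : ℕ) := by
  by_cases h1 : (p : ℕ) = j
  · have : p = (⟨j, by omega⟩ : Fin n) := by simp [Fin.ext_iff, h1]
    rw [this, Equiv.swap_apply_left, if_pos rfl]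
  · by_cases h2 : (p : ℕ) = j + 1
    · have : p = (⟨j + 1, hj⟩ : Fin n) := by simp [Fin.ext_iff, h2]
      rw [this, Equiv.swap_apply_right, if_neg (by simpa using h1), if_pos]
      simp [h2]
    · rw [Equiv.swap_apply_of_ne_of_ne (by simp [Fin.ext_iff, h1]) (by simp [Fin.ext_iff, h2]),
        if_neg h1, if_neg h2]

lemma swapAt_left (j : ℕ) (hj : j + 1 < n) (α : Fin n → ℕ) :
    swapAt n j α ⟨j, by omega⟩ = α ⟨j + 1, hj⟩ := by
  rw [swapAt_apply j hj, Equiv.swap_apply_left]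

lemma swapAt_right (j : ℕ) (hj : j + 1 < n) (α : Fin n → ℕ) :
    swapAt n j α ⟨j + 1, hj⟩ = α ⟨j, by omega⟩ := by
  rw [swapAt_apply j hj, Equiv.swap_apply_right]

lemma swapAt_other (j : ℕ) (hj : j + 1 < n) (α : Fin n → ℕ) (p : Fin n)
    (h1 : (p : ℕ) ≠ j) (h2 : (p : ℕ) ≠ j + 1) :
    swapAt n j α p = α p := by
  rw [swapAt_apply j hj,
    Equiv.swap_apply_of_ne_of_ne (by simp [Fin.ext_iff, h1]) (by simp [Fin.ext_iff, h2])]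

lemma swapAt_involutive (j : ℕ) (α : Fin n → ℕ) :
    swapAt n j (swapAt n j α) = α := by
  by_cases hj : j + 1 < n
  · funext p
    rw [swapAt_apply j hj, swapAt_apply j hj, Equiv.swap_apply_self]
  · rw [swapAt, dif_neg hj, swapAt, dif_neg hj]

/-- `Zc` only depends on the zero-pattern. -/
lemma Zc_congr_pattern (α α' : Fin n → ℕ) (h : ∀ p, α p = 0 ↔ α' p = 0) :
    Zc n α = Zc n α' := by
  unfold Zc
  congr 1
  apply Finset.filter_congr
  intro pq _
  simp only [ne_eq, h pq.1, h pq.2]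

/-- A swap of two entries that are both zero or both nonzero preserves `Zc`. -/
lemma Zc_swap_same (j : ℕ) (hj : j + 1 < n) (α : Fin n → ℕ)
    (h : α ⟨j, by omega⟩ = 0 ↔ α ⟨j + 1, hj⟩ = 0) :
    Zc n (swapAt n j α) = Zc n α := by
  apply Zc_congr_pattern
  intro p
  by_cases h1 : (p : ℕ) = j
  · have hp : p = (⟨j, by omega⟩ : Fin n) := by simp [Fin.ext_iff, h1]
    rw [hp, swapAt_left j hj]
    exact (h.symm)
  · by_cases h2 : (p : ℕ) = j + 1
    · have hp : p = (⟨j + 1, hj⟩ : Fin n) := by simp [Fin.ext_iff, h2]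
      rw [hp, swapAt_right j hj]
      exact h
    · rw [swapAt_other j hj α p h1 h2]

/-- A good swap decreases `Zc` by exactly one. -/
lemma Zc_good (j : ℕ) (α : Fin n → ℕ) (hg : Good n α j) :
    Zc n α = Zc n (swapAt n j α) + 1 := by
  obtain ⟨hj, h0, h1⟩ := hg
  set β := swapAt n j α with hβ
  set τ := Equiv.swap (⟨j, by omega⟩ : Fin n) ⟨j + 1, hj⟩ with hτ
  set S : Finset (Fin n × Fin n) := Finset.univ.filter fun pq : Fin n × Fin n =>
    (pq.1 : ℕ) < (pq.2 : ℕ) ∧ α pq.1 = 0 ∧ α pq.2 ≠ 0 with hS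
  set S' : Finset (Fin n × Fin n) := Finset.univ.filter fun pq : Fin n × Fin n =>
    (pq.1 : ℕ) < (pq.2 : ℕ) ∧ β pq.1 = 0 ∧ β pq.2 ≠ 0 with hS'
  have hmem : (⟨⟨j, by omega⟩, ⟨j + 1, hj⟩⟩ : Fin n × Fin n) ∈ S := by
    rw [hS, Finset.mem_filter]
    exact ⟨Finset.mem_univ _, by simp, h0, h1⟩
  have hβa : ∀ p : Fin n, β p = α (τ p) := fun p => swapAt_apply j hj α p
  have hττ : ∀ p : Fin n, τ (τ p) = p := fun p => Equiv.swap_apply_self _ _ p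
  have hcard : (S.erase ⟨⟨j, by omega⟩, ⟨j + 1, hj⟩⟩).card = S'.card := by
    apply Finset.card_nbij (i := fun pq => (τ pq.1, τ pq.2))
    · -- maps to
      intro pq hpq
      rw [Finset.mem_coe, Finset.mem_erase] at hpq
      obtain ⟨hne, hpq⟩ := hpq
      rw [hS, Finset.mem_filter] at hpq
      obtain ⟨-, hlt, hz, hnz⟩ := hpq
      rw [Finset.mem_coe, hS', Finset.mem_filter]
      refine ⟨Finset.mem_univ _, ?_, by rw [hβa, hττ]; exact hz, by rw [hβa, hττ]; exact hnz⟩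
      -- inequality case analysis
      have hne' : ¬((pq.1 : ℕ) = j ∧ (pq.2 : ℕ) = j + 1) := by
        intro ⟨e1, e2⟩
        apply hne
        have : pq.1 = (⟨j, by omega⟩ : Fin n) := by simp [Fin.ext_iff, e1]
        have h2 : pq.2 = (⟨j + 1, hj⟩ : Fin n) := by simp [Fin.ext_iff, e2]
        rw [← this, ← h2]
      rw [hτ, swap_val j hj, swap_val j hj]
      split_ifs <;> omega
    · -- inj
      intro pq _ pq' _ h
      have h1' := congrArg Prod.fst h
      have h2' := congrArg Prod.snd h
      simp only at h1' h2'
      have e1 : pq.1 = pq'.1 := by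
        have := congrArg τ h1'; rwa [hττ, hττ] at this
      have e2 : pq.2 = pq'.2 := by
        have := congrArg τ h2'; rwa [hττ, hττ] at this
      exact Prod.ext e1 e2
    · -- surj
      intro pq hpq
      have hpq' : pq ∈ S' := hpq
      rw [hS', Finset.mem_filter] at hpq'
      obtain ⟨-, hlt, hz, hnz⟩ := hpq'
      refine ⟨(τ pq.1, τ pq.2), Finset.mem_coe.mpr ?_, by simp only [hττ]⟩
      rw [Finset.mem_erase]
      have hz' : α (τ pq.1) = 0 := by rw [← hβa]; exact hz
      have hnz' : α (τ pq.2) ≠ 0 := by rw [← hβa]; exact hnz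
      have hp1 : (pq.1 : ℕ) ≠ j := by
        intro e
        have : pq.1 = (⟨j, by omega⟩ : Fin n) := by simp [Fin.ext_iff, e]
        rw [this] at hz
        rw [hβa, hτ] at hz
        rw [Equiv.swap_apply_left] at hz
        exact h1 hz
      have hp2 : (pq.2 : ℕ) ≠ j + 1 := by
        intro e
        have : pq.2 = (⟨j + 1, hj⟩ : Fin n) := by simp [Fin.ext_iff, e]
        rw [this] at hnz
        rw [hβa, hτ] at hnz
        rw [Equiv.swap_apply_right] at hnz
        exact hnz h0
      constructor
      · intro e
        have e1 : τ pq.1 = ⟨j, by omega⟩ := (Prod.ext_iff.mp e).1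
        have e2 : τ pq.2 = ⟨j + 1, hj⟩ := (Prod.ext_iff.mp e).2
        have f1 := congrArg τ e1
        have f2 := congrArg τ e2
        rw [hττ] at f1 f2
        rw [hτ, Equiv.swap_apply_left] at f1
        rw [hτ, Equiv.swap_apply_right] at f2
        have g1 : (pq.1 : ℕ) = j + 1 := by rw [f1]
        have g2 : (pq.2 : ℕ) = j := by rw [f2]
        omega
      · rw [hS, Finset.mem_filter]
        refine ⟨Finset.mem_univ _, ?_, hz', hnz'⟩
        rw [hτ, swap_val j hj, swap_val j hj]
        have : (pq.1 : ℕ) ≠ j := hp1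
        have : (pq.2 : ℕ) ≠ j + 1 := hp2
        split_ifs <;> omega
  have : S.card = (S.erase ⟨⟨j, by omega⟩, ⟨j + 1, hj⟩⟩).card + 1 := by
    rw [Finset.card_erase_of_mem hmem]
    have : 0 < S.card := Finset.card_pos.mpr ⟨_, hmem⟩
    omega
  rw [Zc, ← hS, this, hcard, Zc, ← hS']

/-- Any adjacent swap decreases `Zc` by at most one. -/
lemma Zc_swap_ge (j : ℕ) (α : Fin n → ℕ) :
    Zc n α ≤ Zc n (swapAt n j α) + 1 := by
  by_cases hj : j + 1 < n
  · by_cases h0 : α ⟨j, by omega⟩ = 0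
    · by_cases h1 : α ⟨j + 1, hj⟩ = 0
      · rw [Zc_swap_same j hj α (by rw [h0, h1])]
        omega
      · rw [Zc_good j α ⟨hj, h0, h1⟩]
    · by_cases h1 : α ⟨j + 1, hj⟩ = 0
      · -- bad swap: increases
        have hgood : Good n (swapAt n j α) j :=
          ⟨hj, by rw [swapAt_left j hj]; exact h1, by rw [swapAt_right j hj]; exact h0⟩
        have := Zc_good j (swapAt n j α) hgood
        rw [swapAt_involutive j α] at this
        omega
      · rw [Zc_swap_same j hj α (iff_of_false h0 h1)]
        omega
  · have he : swapAt n j α = α := by rw [swapAt, dif_neg hj]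
    rw [he]
    omega

/-- A strictly `Zc`-decreasing swap is good. -/
lemma good_of_Zc_lt (j : ℕ) (hj : j + 1 < n) (α : Fin n → ℕ)
    (h : Zc n (swapAt n j α) < Zc n α) : Good n α j := by
  by_cases h0 : α ⟨j, by omega⟩ = 0
  · by_cases h1 : α ⟨j + 1, hj⟩ = 0
    · rw [Zc_swap_same j hj α (by rw [h0, h1])] at h
      omega
    · exact ⟨hj, h0, h1⟩
  · by_cases h1 : α ⟨j + 1, hj⟩ = 0
    · have hgood : Good n (swapAt n j α) j :=
        ⟨hj, by rw [swapAt_left j hj]; exact h1, by rw [swapAt_right j hj]; exact h0⟩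
      have := Zc_good j (swapAt n j α) hgood
      rw [swapAt_involutive j α] at this
      omega
    · rw [Zc_swap_same j hj α (iff_of_false h0 h1)] at h
      omega

/-- Lower bound: a word of adjacent swaps can decrease `Zc` by at most its length. -/
lemma Zc_word_ge (w : List ℕ) (α : Fin n → ℕ) :
    Zc n α ≤ Zc n (w.foldr (swapAt n) α) + w.length := by
  induction w with
  | nil => simp
  | cons j t ih =>
    have h1 := Zc_swap_ge j (t.foldr (swapAt n) α)
    have : Zc n α ≤ Zc n (t.foldr (swapAt n) α) + t.length := by
      have := ih
      omega
    simp only [List.foldr_cons, List.length_cons]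
    omega

end PartB

section PartC

variable {n : ℕ}

def SortedZero (n : ℕ) (α : Fin n → ℕ) : Prop :=
  ∀ p q : Fin n, p ≤ q → α p = 0 → α q = 0

lemma getD_ofFn (α : Fin n → ℕ) (k : ℕ) (hk : k < n) :
    (List.ofFn α).getD k 0 = α ⟨k, hk⟩ := by
  rw [List.getD_eq_getElem _ _ (by simpa using hk), List.getElem_ofFn]

lemma getD_all_zero (L : List ℕ) (h : ∀ x ∈ L, x = 0) (p : ℕ) : L.getD p 0 = 0 := by
  by_cases hp : p < L.length
  · rw [List.getD_eq_getElem _ _ hp]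
    exact h _ (List.getElem_mem hp)
  · rw [List.getD_eq_default _ _ (by omega)]

lemma filter_getD_of_sorted (L : List ℕ)
    (h : ∀ (i j : ℕ) (hi : i < L.length) (hj : j < L.length), i ≤ j → L[i] = 0 → L[j] = 0) :
    ∀ p : ℕ, (L.filter (· ≠ 0)).getD p 0 = L.getD p 0 := by
  induction L with
  | nil => intro p; simp
  | cons a t ih =>
    intro p
    by_cases ha : a = 0
    · have hall : ∀ x ∈ a :: t, x = 0 := by
        intro x hx
        obtain ⟨k, hk, he⟩ := List.getElem_of_mem hx
        rw [← he]
        exact h 0 k (by simp) hk (by omega) (by simpa using ha)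
      have hfil : (a :: t).filter (· ≠ 0) = [] := by
        rw [List.filter_eq_nil_iff]
        intro x hx
        simp [hall x hx]
      rw [hfil, getD_all_zero (a :: t) hall p]
      simp
    · have hfil : (a :: t).filter (· ≠ 0) = a :: t.filter (· ≠ 0) := by
        rw [List.filter_cons_of_pos (by simpa using ha)]
      rw [hfil]
      match p with
      | 0 => simp
      | (k + 1) =>
        rw [List.getD_cons_succ, List.getD_cons_succ]
        exact ih (fun i j hi hj hij hz =>
          h (i + 1) (j + 1) (by simpa using hi) (by simpa using hj) (by omega)
            (by simpa using hz)) k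

lemma flatC_of_sorted (α : Fin n → ℕ) (hs : SortedZero n α) : flatC n α = α := by
  funext p
  have hlist : ∀ (i j : ℕ) (hi : i < (List.ofFn α).length) (hj : j < (List.ofFn α).length),
      i ≤ j → (List.ofFn α)[i] = 0 → (List.ofFn α)[j] = 0 := by
    intro i j hi hj hij hz
    rw [List.getElem_ofFn] at hz ⊢
    exact hs _ _ (by simpa [Fin.le_def] using hij) hz
  show ((List.ofFn α).filter (· ≠ 0)).getD (p : ℕ) 0 = α p
  rw [filter_getD_of_sorted _ hlist, getD_ofFn α _ p.2]

lemma flatC_pos_entries (α : Fin n → ℕ) (p : Fin n) (hp : flatC n α p ≠ 0) :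
    (p : ℕ) < ((List.ofFn α).filter (· ≠ 0)).length := by
  by_contra h
  apply hp
  show ((List.ofFn α).filter (· ≠ 0)).getD (p : ℕ) 0 = 0
  rw [List.getD_eq_default _ _ (by omega)]

lemma sortedZero_flatC (α : Fin n → ℕ) : SortedZero n (flatC n α) := by
  intro p q hpq hp
  by_contra hq
  have hlt := flatC_pos_entries α q hq
  have hplt : (p : ℕ) < ((List.ofFn α).filter (· ≠ 0)).length := by
    have : (p : ℕ) ≤ (q : ℕ) := hpq
    omega
  apply hq
  have hpz : ((List.ofFn α).filter (· ≠ 0)).getD (p : ℕ) 0 = 0 := hp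
  rw [List.getD_eq_getElem _ _ hplt] at hpz
  have hmem := List.getElem_mem hplt
  have hne := List.of_mem_filter hmem
  exact absurd hpz (of_decide_eq_true hne)

lemma sorted_of_Zc_zero (α : Fin n → ℕ) (hZ : Zc n α = 0) : SortedZero n α := by
  intro p q hpq hp
  by_contra hq
  rcases eq_or_ne p q with rfl | hne
  · exact hq hp
  have hlt : (p : ℕ) < (q : ℕ) := by
    have h1 : (p : ℕ) ≤ (q : ℕ) := hpq
    have : (p : ℕ) ≠ (q : ℕ) := fun e => hne (Fin.ext e)
    omega
  have hmem : (⟨p, q⟩ : Fin n × Fin n) ∈ Finset.univ.filter fun pq : Fin n × Fin n =>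
      (pq.1 : ℕ) < (pq.2 : ℕ) ∧ α pq.1 = 0 ∧ α pq.2 ≠ 0 := by
    rw [Finset.mem_filter]
    exact ⟨Finset.mem_univ _, hlt, hp, hq⟩
  have : 0 < Zc n α := Finset.card_pos.mpr ⟨_, hmem⟩
  omega

lemma Zc_zero_of_sorted (α : Fin n → ℕ) (hs : SortedZero n α) : Zc n α = 0 := by
  rw [Zc, Finset.card_eq_zero, Finset.filter_eq_empty_iff]
  intro pq _
  rintro ⟨hlt, hz, hnz⟩
  exact hnz (hs pq.1 pq.2 (by exact le_of_lt hlt) hz)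

lemma sorted_of_no_good (α : Fin n → ℕ) (hng : ∀ j, ¬ Good n α j) : SortedZero n α := by
  have aux : ∀ (d : ℕ) (p : Fin n) (h : (p : ℕ) + d < n), α p = 0 → α ⟨(p : ℕ) + d, h⟩ = 0 := by
    intro d
    induction d with
    | zero =>
      intro p h hp
      have he : (⟨(p : ℕ) + 0, h⟩ : Fin n) = p := by simp [Fin.ext_iff]
      rw [he]; exact hp
    | succ d ihd =>
      intro p h hp
      have h' : (p : ℕ) + d < n := by omega
      have hd := ihd p h' hp
      by_contra hne
      exact hng ((p : ℕ) + d) ⟨by omega, hd, hne⟩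
  intro p q hpq hp
  have hle : (p : ℕ) ≤ (q : ℕ) := hpq
  have hq : q = ⟨(p : ℕ) + ((q : ℕ) - (p : ℕ)), by omega⟩ := by simp [Fin.ext_iff]; omega
  rw [hq]
  exact aux _ p _ hp

/-- Swapping adjacent entries, one of which is zero, does not change the filtered list. -/
lemma filter_set2 : ∀ (j : ℕ) (L : List ℕ), j + 1 < L.length →
    (L.getD j 0 = 0 ∨ L.getD (j + 1) 0 = 0) →
    ((L.set j (L.getD (j + 1) 0)).set (j + 1) (L.getD j 0)).filter (· ≠ 0)
      = L.filter (· ≠ 0) := by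
  intro j
  induction j with
  | zero =>
    intro L hj h
    match L, hj with
    | a :: b :: t, _ =>
      simp only [List.getD_cons_zero, List.getD_cons_succ, List.set_cons_zero,
        List.set_cons_succ] at h ⊢
      rcases h with h | h <;> subst h <;> simp [List.filter_cons]
  | succ j ih =>
    intro L hj h
    match L, hj with
    | a :: t, hj' =>
      simp only [List.getD_cons_succ, List.set_cons_succ] at h ⊢
      have hlen : j + 1 < t.length := by
        have := hj'
        simp only [List.length_cons] at this
        omega
      rw [List.filter_cons, List.filter_cons, ih t hlen h]

lemma ofFn_swapAt (j : ℕ) (hj : j + 1 < n) (α : Fin n → ℕ) :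
    List.ofFn (swapAt n j α)
      = ((List.ofFn α).set j (α ⟨j + 1, hj⟩)).set (j + 1) (α ⟨j, by omega⟩) := by
  apply List.ext_getElem (by simp)
  intro k h1 h2
  have hk : k < n := by simpa using h1
  simp only [List.getElem_ofFn, List.getElem_set]
  by_cases e2 : k = j + 1
  · rw [if_pos (by omega)]
    have he : (⟨k, hk⟩ : Fin n) = ⟨j + 1, hj⟩ := by simp [Fin.ext_iff, e2]
    rw [he]
    exact swapAt_right j hj α
  · rw [if_neg (by omega)]
    by_cases e1 : k = j
    · rw [if_pos (by omega)]
      have he : (⟨k, hk⟩ : Fin n) = ⟨j, by omega⟩ := by simp [Fin.ext_iff, e1]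
      rw [he]
      exact swapAt_left j hj α
    · rw [if_neg (by omega)]
      exact swapAt_other j hj α ⟨k, hk⟩ (by simpa using e1) (by simpa using e2)

lemma flatC_swap (j : ℕ) (hj : j + 1 < n) (α : Fin n → ℕ) (h0 : α ⟨j, by omega⟩ = 0) :
    flatC n (swapAt n j α) = flatC n α := by
  have e0 : α ⟨j, by omega⟩ = (List.ofFn α).getD j 0 := (getD_ofFn α j (by omega)).symm
  have e1 : α ⟨j + 1, hj⟩ = (List.ofFn α).getD (j + 1) 0 := (getD_ofFn α (j + 1) hj).symm
  have hfilter : (List.ofFn (swapAt n j α)).filter (· ≠ 0) = (List.ofFn α).filter (· ≠ 0) := by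
    rw [ofFn_swapAt j hj α, e0, e1]
    exact filter_set2 j (List.ofFn α) (by simpa using hj) (Or.inl (by rw [← e0]; exact h0))
  funext p
  show ((List.ofFn (swapAt n j α)).filter (· ≠ 0)).getD (p : ℕ) 0 = _
  rw [hfilter]
  rfl

lemma exists_good_word : ∀ (N : ℕ) (α : Fin n → ℕ), Zc n α ≤ N →
    ∃ w : List ℕ, (∀ j ∈ w, j + 1 < n) ∧ w.foldr (swapAt n) α = flatC n α ∧
      w.length = Zc n α := by
  intro N
  induction N with
  | zero =>
    intro α hZ
    have hs := sorted_of_Zc_zero α (by omega)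
    exact ⟨[], by simp, by simp [flatC_of_sorted α hs], by simp; omega⟩
  | succ N ih =>
    intro α hZ
    by_cases hg : ∃ j, Good n α j
    · obtain ⟨j, hj⟩ := hg
      have hZd := Zc_good j α hj
      obtain ⟨w, hw1, hw2, hw3⟩ := ih (swapAt n j α) (by omega)
      refine ⟨w ++ [j], ?_, ?_, ?_⟩
      · intro x hx
        rcases List.mem_append.mp hx with hx | hx
        · exact hw1 x hx
        · simp at hx; subst hx; exact hj.1
      · rw [List.foldr_append]
        simp only [List.foldr_cons, List.foldr_nil]
        rw [hw2, flatC_swap j hj.1 α hj.2.1]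
      · simp only [List.length_append, List.length_singleton, hw3]
        omega
    · have hs := sorted_of_no_good α (fun j hgj => hg ⟨j, hgj⟩)
      exact ⟨[], by simp, by simp [flatC_of_sorted α hs],
        by simp [Zc_zero_of_sorted α hs]⟩

/-- The fundamental Demazure atom, defined by recursion on good swaps. -/
noncomputable def FAtom (n : ℕ) (α : Fin n → ℕ) : MvPolynomial (Fin n) ℂ :=
  if h : ∃ j, Good n α j then
    thetatilde n (Nat.find h) (FAtom n (swapAt n (Nat.find h) α))
  else monomial (toExp n α) 1
termination_by Zc n α
decreasing_by
  have := Zc_good (Nat.find h) α (Nat.find_spec h)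
  omega

lemma swapAt_comm (i c : ℕ) (hi1 : i + 1 < n) (hc1 : c + 1 < n)
    (d1 : i ≠ c) (d2 : i + 1 ≠ c) (d3 : c + 1 ≠ i) (α : Fin n → ℕ) :
    swapAt n i (swapAt n c α) = swapAt n c (swapAt n i α) := by
  have e1 : i ≠ c + 1 := by omega
  have e2 : i + 1 ≠ c + 1 := by omega
  funext p
  by_cases p1 : (p : ℕ) = i
  · have hp : p = (⟨i, by omega⟩ : Fin n) := by simp [Fin.ext_iff, p1]
    rw [hp, swapAt_left i hi1 (swapAt n c α),
      swapAt_other c hc1 α ⟨i + 1, hi1⟩ (show i + 1 ≠ c from d2) (show i + 1 ≠ c + 1 from e2),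
      swapAt_other c hc1 (swapAt n i α) ⟨i, by omega⟩ (show i ≠ c from d1)
        (show i ≠ c + 1 from e1),
      swapAt_left i hi1 α]
  · by_cases p2 : (p : ℕ) = i + 1
    · have hp : p = (⟨i + 1, hi1⟩ : Fin n) := by simp [Fin.ext_iff, p2]
      rw [hp, swapAt_right i hi1 (swapAt n c α),
        swapAt_other c hc1 α ⟨i, by omega⟩ (show i ≠ c from d1) (show i ≠ c + 1 from e1),
        swapAt_other c hc1 (swapAt n i α) ⟨i + 1, hi1⟩ (show i + 1 ≠ c from d2)
          (show i + 1 ≠ c + 1 from e2),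
        swapAt_right i hi1 α]
    · by_cases p3 : (p : ℕ) = c
      · have hp : p = (⟨c, by omega⟩ : Fin n) := by simp [Fin.ext_iff, p3]
        rw [hp, swapAt_other i hi1 (swapAt n c α) ⟨c, by omega⟩
            (show c ≠ i from Ne.symm d1) (show c ≠ i + 1 from Ne.symm d2),
          swapAt_left c hc1 α, swapAt_left c hc1 (swapAt n i α),
          swapAt_other i hi1 α ⟨c + 1, hc1⟩ (show c + 1 ≠ i from d3)
            (show c + 1 ≠ i + 1 from by omega)]
      · by_cases p4 : (p : ℕ) = c + 1
        · have hp : p = (⟨c + 1, hc1⟩ : Fin n) := by simp [Fin.ext_iff, p4]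
          rw [hp, swapAt_other i hi1 (swapAt n c α) ⟨c + 1, hc1⟩
              (show c + 1 ≠ i from d3) (show c + 1 ≠ i + 1 from by omega),
            swapAt_right c hc1 α, swapAt_right c hc1 (swapAt n i α),
            swapAt_other i hi1 α ⟨c, by omega⟩ (show c ≠ i from Ne.symm d1)
              (show c ≠ i + 1 from Ne.symm d2)]
        · rw [swapAt_other i hi1 (swapAt n c α) p p1 p2, swapAt_other c hc1 α p p3 p4,
            swapAt_other c hc1 (swapAt n i α) p p3 p4, swapAt_other i hi1 α p p1 p2]

/-- Exchange lemma: the atom satisfies the recursion at EVERY good index. -/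
lemma FAtom_good : ∀ (N : ℕ) (α : Fin n → ℕ), Zc n α ≤ N → ∀ i, Good n α i →
    FAtom n α = thetatilde n i (FAtom n (swapAt n i α)) := by
  intro N
  induction N with
  | zero =>
    intro α hZ i hgood
    have := Zc_good i α hgood
    omega
  | succ N ih =>
    intro α hZ i hgood
    have hex : ∃ j, Good n α j := ⟨i, hgood⟩
    rw [FAtom, dif_pos hex]
    have hcg : Good n α (Nat.find hex) := Nat.find_spec hex
    set c := Nat.find hex with hc
    by_cases hic : i = c
    · rw [hic]
    · obtain ⟨hi1, hi0, hi1'⟩ := hgood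
      obtain ⟨hc1, hc0, hc1'⟩ := hcg
      have d2 : i + 1 ≠ c := by
        intro e
        apply hi1'
        have he : (⟨i + 1, hi1⟩ : Fin n) = ⟨c, by omega⟩ := by simp [Fin.ext_iff, e]
        rw [he]; exact hc0
      have d3 : c + 1 ≠ i := by
        intro e
        apply hc1'
        have he : (⟨c + 1, hc1⟩ : Fin n) = ⟨i, by omega⟩ := by simp [Fin.ext_iff, e]
        rw [he]; exact hi0
      have hg1 : Good n (swapAt n c α) i :=
        ⟨hi1, by rw [swapAt_other c hc1 α ⟨i, by omega⟩ (show i ≠ c from hic)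
            (show i ≠ c + 1 from by omega)]; exact hi0,
          by rw [swapAt_other c hc1 α ⟨i + 1, hi1⟩ (show i + 1 ≠ c from d2)
            (show i + 1 ≠ c + 1 from by omega)]; exact hi1'⟩
      have hg2 : Good n (swapAt n i α) c :=
        ⟨hc1, by rw [swapAt_other i hi1 α ⟨c, by omega⟩ (show c ≠ i from Ne.symm hic)
            (show c ≠ i + 1 from Ne.symm d2)]; exact hc0,
          by rw [swapAt_other i hi1 α ⟨c + 1, hc1⟩ (show c + 1 ≠ i from d3)
            (show c + 1 ≠ i + 1 from by omega)]; exact hc1'⟩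
      have hZc : Zc n (swapAt n c α) ≤ N := by
        have := Zc_good c α ⟨hc1, hc0, hc1'⟩; omega
      have hZi : Zc n (swapAt n i α) ≤ N := by
        have := Zc_good i α ⟨hi1, hi0, hi1'⟩; omega
      rw [ih (swapAt n c α) hZc i hg1, ih (swapAt n i α) hZi c hg2,
        swapAt_comm i c hi1 hc1 hic d2 d3]
      exact thetatilde_comm c i hc1 hi1 (Ne.symm hic) d3 d2 _

/-- Main lemma: evaluating any minimal word on `x^{flat α}` yields the atom. -/
lemma minword_eval : ∀ (l : List ℕ) (α : Fin n → ℕ), IsMinWord n l α →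
    thetaWordInv n l (monomial (toExp n (flatC n α)) (1 : ℂ)) = FAtom n α := by
  intro l
  induction l using List.reverseRecOn with
  | nil =>
    intro α hl
    obtain ⟨-, hfold, -⟩ := hl
    have hflat : flatC n α = α := by rw [← hfold]; rfl
    have hs : SortedZero n α := by rw [← hflat]; exact sortedZero_flatC α
    have hng : ¬ ∃ j, Good n α j := by
      rintro ⟨j, hj, h0, h1⟩
      exact h1 (hs _ _ (by simp [Fin.le_def]) h0)
    rw [thetaWordInv]
    simp only [List.foldl_nil]
    rw [FAtom, dif_neg hng, hflat]
  | append_singleton m j ihm =>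
    intro α hl
    obtain ⟨hlv, hfold, hmin⟩ := hl
    have hjn : j + 1 < n := hlv j (by simp)
    set β := swapAt n j α with hβ
    have hfold' : m.foldr (swapAt n) β = flatC n α := by
      rw [← hfold, List.foldr_append]
      simp only [List.foldr_cons, List.foldr_nil]
      rfl
    have hZf : Zc n (flatC n α) = 0 := Zc_zero_of_sorted _ (sortedZero_flatC α)
    obtain ⟨w, hw1, hw2, hw3⟩ := exists_good_word (Zc n α) α le_rfl
    have hlen_le : (m ++ [j]).length ≤ w.length := hmin w hw1 hw2
    have hlb : Zc n α ≤ (m ++ [j]).length := by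
      have := Zc_word_ge (m ++ [j]) α
      rw [hfold, hZf] at this
      omega
    have hlen : (m ++ [j]).length = Zc n α := by
      rw [hw3] at hlen_le
      omega
    have hmlb : Zc n β ≤ m.length := by
      have := Zc_word_ge m β
      rw [hfold', hZf] at this
      omega
    have hub : Zc n α ≤ Zc n β + 1 := by
      have := Zc_swap_ge j α
      rw [← hβ] at this
      exact this
    have hmlen : m.length + 1 = Zc n α := by
      simp only [List.length_append, List.length_singleton] at hlen
      omega
    have hgood : Good n α j := good_of_Zc_lt j hjn α
      (show Zc n (swapAt n j α) < Zc n α by rw [← hβ]; omega)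
    have hflatβ : flatC n β = flatC n α := flatC_swap j hjn α hgood.2.1
    have hminm : IsMinWord n m β := by
      refine ⟨fun x hx => hlv x (by simp [hx]), by rw [hfold', hflatβ], ?_⟩
      intro w' hw'1 hw'2
      have := Zc_word_ge w' β
      rw [hw'2, hflatβ, hZf] at this
      omega
    rw [thetaWordInv, List.foldl_append]
    simp only [List.foldl_cons, List.foldl_nil]
    have hrw : m.foldl (fun acc j => thetatilde n j acc) (monomial (toExp n (flatC n α)) (1 : ℂ))
        = thetaWordInv n m (monomial (toExp n (flatC n β)) (1 : ℂ)) := by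
      rw [thetaWordInv, hflatβ]
    rw [hrw, ihm β hminm]
    exact (FAtom_good (Zc n α) α le_rfl j hgood).symm

end PartC

/-- Lemma 3 of the paper: the fundamental Demazure atom
`Ã_α = θ̃_{w_α⁻¹}(x^{flat(α)})` satisfies the recursion
`Ã_α = θ̃ᵢ(Ã_{sᵢ(α)})` whenever `αᵢ = 0` and `αᵢ₊₁ ≠ 0`.  Here the atom for a
weak composition `β` is computed as `thetaWordInv n l (x^{flat β})` for any
minimal-length word `l` with `s_{l₁} ⋯ s_{l_k}(β) = flat(β)`. -/
theorem fundamental_atom_recursion (n i : ℕ) (hi : i + 1 < n) (α : Fin n → ℕ)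
    (h0 : α ⟨i, by omega⟩ = 0) (h1 : α ⟨i + 1, hi⟩ ≠ 0)
    (l l' : List ℕ) (hl : IsMinWord n l α) (hl' : IsMinWord n l' (swapAt n i α)) :
    thetaWordInv n l (monomial (toExp n (flatC n α)) (1 : ℂ))
      = thetatilde n i
          (thetaWordInv n l' (monomial (toExp n (flatC n (swapAt n i α))) (1 : ℂ))) := by
  have hgood : Good n α i := ⟨hi, h0, h1⟩
  rw [minword_eval l α hl, minword_eval l' (swapAt n i α) hl']
  exact FAtom_good (Zc n α) α le_rfl i hgood
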